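/- Let (Xᵢ, Yᵢ) be i.i.d. with X, Y independent unit Fréchet. Then max_{i≤n} Yᵢ/Xᵢ and max_{i≤n} Xᵢ/Yᵢ are asymptotically independent: lim_{n→∞} P( n^{-1}(max Yᵢ/Xᵢ + 1) ≤ x, n^{-1}(max Xᵢ/Yᵢ + 1) ≤ y ) = exp(-1/x - 1/y) for x, y > 0. -/

import Mathlib

open MeasureTheory ProbabilityTheory Real Filter Set Topology
open scoped ENNReal NNReal

noncomputable def frG (c u : ℝ) : ℝ := if 0 < u then Real.exp (-c/u) / c else 0

lemma frG_hasDerivAt {c u : ℝ} (hc : c ≠ 0) (hu : 0 < u) :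
    HasDerivAt (frG c) (Real.exp (-c/u) / u^2) u := by
  have h1 : HasDerivAt (fun v : ℝ => -c * v⁻¹) (-c * -(u^2)⁻¹) u :=
    (hasDerivAt_inv hu.ne').const_mul (-c)
  have h2 : HasDerivAt (fun v : ℝ => Real.exp (-c * v⁻¹) / c)
      (Real.exp (-c * u⁻¹) * (-c * -(u^2)⁻¹) / c) u := (h1.exp).div_const c
  have h3 : Real.exp (-c * u⁻¹) * (-c * -(u^2)⁻¹) / c = Real.exp (-c/u) / u^2 := by
    rw [show (-c : ℝ)/u = -c * u⁻¹ by ring]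
    field_simp
  rw [h3] at h2
  apply h2.congr_of_eventuallyEq
  filter_upwards [eventually_nhds_iff.2 ⟨Ioi 0, fun v hv => hv, isOpen_Ioi, hu⟩] with v hv
  simp only [frG]
  rw [show (-c : ℝ)/v = -c * v⁻¹ by ring]; exact if_pos hv

lemma frG_tendsto_atTop {c : ℝ} : Tendsto (frG c) atTop (𝓝 (1/c)) := by
  have h1 : Tendsto (fun v : ℝ => Real.exp (-c * v⁻¹) / c) atTop (𝓝 (Real.exp (-c * 0) / c)) :=
    ((Real.continuous_exp.tendsto _).comp (tendsto_inv_atTop_zero.const_mul (-c))).div_const c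
  simp only [mul_zero, Real.exp_zero] at h1
  apply h1.congr'
  filter_upwards [eventually_gt_atTop 0] with v hv
  simp only [frG, if_pos hv]
  rw [show (-c : ℝ)/v = -c * v⁻¹ by ring]

lemma frG_continuousWithinAt {c : ℝ} (hc : 0 < c) :
    ContinuousWithinAt (frG c) (Ici 0) 0 := by
  rw [← continuousWithinAt_Ioi_iff_Ici]
  have h0 : Tendsto (fun v : ℝ => c / v) (𝓝[>] 0) atTop :=
    Tendsto.const_mul_atTop hc tendsto_inv_nhdsGT_zero |>.congr (fun v => by rw [div_eq_mul_inv])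
  have h1 : Tendsto (fun v : ℝ => Real.exp (-(c / v)) / c) (𝓝[>] 0) (𝓝 (0 / c)) :=
    (Real.tendsto_exp_atBot.comp (tendsto_neg_atTop_atBot.comp h0)).div_const c
  rw [zero_div] at h1
  have h2 : Tendsto (frG c) (𝓝[>] 0) (𝓝 0) := by
    apply h1.congr'
    filter_upwards [self_mem_nhdsWithin] with v (hv : 0 < v)
    simp [frG, if_pos hv, neg_div]
  rw [ContinuousWithinAt, show frG c 0 = 0 from by simp [frG]]
  exact h2

lemma frG_continuousWithinAt' {c t : ℝ} (hc : 0 < c) (ht : 0 ≤ t) :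
    ContinuousWithinAt (frG c) (Ici t) t := by
  rcases ht.eq_or_lt with rfl | ht'
  · exact frG_continuousWithinAt hc
  · exact ((frG_hasDerivAt hc.ne' ht').continuousAt).continuousWithinAt

lemma fr_integrableOn {c t : ℝ} (hc : 0 < c) (ht : 0 ≤ t) :
    IntegrableOn (fun u => Real.exp (-c/u) / u^2) (Ioi t) :=
  integrableOn_Ioi_deriv_of_nonneg (frG_continuousWithinAt' hc ht)
    (fun u hu => frG_hasDerivAt hc.ne' (ht.trans_lt hu))
    (fun u _ => by positivity) frG_tendsto_atTop

lemma fr_integral {c t : ℝ} (hc : 0 < c) (ht : 0 ≤ t) :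
    ∫ u in Ioi t, Real.exp (-c/u) / u^2 = 1/c - frG c t :=
  integral_Ioi_of_hasDerivAt_of_nonneg (frG_continuousWithinAt' hc ht)
    (fun u hu => frG_hasDerivAt hc.ne' (ht.trans_lt hu))
    (fun u _ => by positivity) frG_tendsto_atTop

lemma fr_integral_Ioc {c t : ℝ} (hc : 0 < c) (ht : 0 < t) :
    ∫ u in Ioc 0 t, Real.exp (-c/u) / u^2 = Real.exp (-c/t) / c := by
  have hsplit : Ioc 0 t ∪ Ioi t = Ioi (0:ℝ) := Ioc_union_Ioi_eq_Ioi ht.le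
  have hdisj : Disjoint (Ioc (0:ℝ) t) (Ioi t) := Ioc_disjoint_Ioi le_rfl
  have h1 : ∫ u in Ioc (0:ℝ) t ∪ Ioi t, Real.exp (-c/u) / u^2
      = (∫ u in Ioc (0:ℝ) t, Real.exp (-c/u) / u^2) + ∫ u in Ioi t, Real.exp (-c/u) / u^2 :=
    setIntegral_union hdisj measurableSet_Ioi
      ((fr_integrableOn hc le_rfl).mono_set (by rw [← hsplit]; exact subset_union_left))
      (fr_integrableOn hc ht.le)
  rw [hsplit, fr_integral hc le_rfl, fr_integral hc ht.le] at h1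
  simp only [frG, if_pos ht, lt_irrefl] at h1
  simp only [if_false] at h1
  linarith

noncomputable def frDen (u : ℝ) : ℝ := if 0 < u then Real.exp (-1/u) / u^2 else 0

lemma frDen_measurable : Measurable frDen := by
  have h1 : Measurable fun u : ℝ => Real.exp (-1/u) / u^2 := by fun_prop
  exact Measurable.ite measurableSet_Ioi h1 measurable_const

noncomputable def frMeasure : Measure ℝ :=
  MeasureTheory.volume.withDensity (fun u => ENNReal.ofReal (frDen u))

lemma lint_Iic0 : ∫⁻ u in Iic (0:ℝ), ENNReal.ofReal (frDen u) = 0 := by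
  have h : ∫⁻ u in Iic (0:ℝ), ENNReal.ofReal (frDen u) = ∫⁻ _ in Iic (0:ℝ), 0 :=
    setLIntegral_congr_fun measurableSet_Iic
      (fun u (hu : u ≤ 0) => by simp [frDen, if_neg (not_lt.2 hu)])
  simpa using h

lemma frMeasure_Iic (t : ℝ) :
    frMeasure (Iic t) = ENNReal.ofReal (if 0 < t then Real.exp (-1/t) else 0) := by
  rw [frMeasure, withDensity_apply _ measurableSet_Iic]
  rcases le_or_gt t 0 with ht | ht
  · rw [if_neg (not_lt.2 ht), ENNReal.ofReal_zero]
    have h : ∫⁻ u in Iic t, ENNReal.ofReal (frDen u) = ∫⁻ _ in Iic t, 0 :=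
      setLIntegral_congr_fun measurableSet_Iic
        (fun u (hu : u ≤ t) => by simp [frDen, if_neg (not_lt.2 (hu.trans ht))])
    simpa using h
  · rw [if_pos ht]
    have hIic : Iic t = Iic 0 ∪ Ioc 0 t := by rw [Iic_union_Ioc_eq_Iic ht.le]
    rw [hIic, lintegral_union measurableSet_Ioc (Iic_disjoint_Ioc le_rfl), lint_Iic0, zero_add]
    have h : ∫⁻ u in Ioc (0:ℝ) t, ENNReal.ofReal (frDen u)
        = ∫⁻ u in Ioc (0:ℝ) t, ENNReal.ofReal (Real.exp (-1/u) / u^2) :=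
      setLIntegral_congr_fun measurableSet_Ioc
        (fun u (hu : u ∈ Ioc 0 t) => by simp only [frDen, if_pos hu.1])
    rw [h, ← ofReal_integral_eq_lintegral_ofReal
      ((fr_integrableOn one_pos le_rfl).mono_set Ioc_subset_Ioi_self)
      (ae_of_all _ (fun u => by positivity))]
    rw [fr_integral_Ioc one_pos ht]
    norm_num

instance : IsProbabilityMeasure frMeasure := by
  constructor
  have huniv : (univ : Set ℝ) = Iic 0 ∪ Ioi 0 := by
    ext u; simp [le_or_gt]
  rw [frMeasure, withDensity_apply _ MeasurableSet.univ, huniv,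
    lintegral_union measurableSet_Ioi (Iic_disjoint_Ioi le_rfl), lint_Iic0, zero_add]
  have h : ∫⁻ u in Ioi (0:ℝ), ENNReal.ofReal (frDen u)
      = ∫⁻ u in Ioi (0:ℝ), ENNReal.ofReal (Real.exp (-1/u) / u^2) :=
    setLIntegral_congr_fun measurableSet_Ioi
      (fun u (hu : 0 < u) => by simp only [frDen, if_pos hu])
  rw [h, ← ofReal_integral_eq_lintegral_ofReal (fr_integrableOn one_pos le_rfl)
    (ae_of_all _ (fun u => by positivity))]
  rw [fr_integral one_pos le_rfl]
  simp [frG]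

lemma map_eq_frMeasure {Ω : Type*} [MeasurableSpace Ω] (μ : Measure Ω) [IsProbabilityMeasure μ]
    (X : Ω → ℝ) (hX : Measurable X) (hpos : ∀ᵐ ω ∂μ, 0 < X ω)
    (hF : ∀ x : ℝ, 0 < x → μ {ω | X ω ≤ x} = ENNReal.ofReal (Real.exp (-1 / x))) :
    Measure.map X μ = frMeasure := by
  have : IsProbabilityMeasure (Measure.map X μ) := Measure.isProbabilityMeasure_map hX.aemeasurable
  apply Measure.ext_of_Iic
  intro t
  rw [Measure.map_apply hX measurableSet_Iic, frMeasure_Iic]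
  rcases le_or_gt t 0 with ht | ht
  · rw [if_neg (not_lt.2 ht), ENNReal.ofReal_zero]
    have hnull : μ {ω | ¬ 0 < X ω} = 0 := by
      rw [← ae_iff]; exact hpos
    exact measure_mono_null (fun ω (hω : X ω ≤ t) => not_lt.2 (hω.trans ht)) hnull
  · rw [if_pos ht]
    exact hF t ht

lemma measure_mul_lt {Ω : Type*} [MeasurableSpace Ω] (μ : Measure Ω) [IsProbabilityMeasure μ]
    (X Y : Ω → ℝ) (hX : Measurable X) (hY : Measurable Y) (hind : IndepFun X Y μ)
    (hXpos : ∀ᵐ ω ∂μ, 0 < X ω) (hYpos : ∀ᵐ ω ∂μ, 0 < Y ω)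
    (hXF : ∀ x : ℝ, 0 < x → μ {ω | X ω ≤ x} = ENNReal.ofReal (Real.exp (-1 / x)))
    (hYF : ∀ x : ℝ, 0 < x → μ {ω | Y ω ≤ x} = ENNReal.ofReal (Real.exp (-1 / x)))
    (a : ℝ) (ha : 0 < a) :
    μ {ω | a * X ω < Y ω} = ENNReal.ofReal (1/(a+1)) := by
  set c2 : ℝ := (a+1)/a with hc2def
  have hc2 : 1 < c2 := by rw [hc2def]; rw [lt_div_iff₀ ha]; linarith
  have hc2' : 0 < c2 := lt_trans one_pos hc2
  have hmap : Measure.map (fun ω => (X ω, Y ω)) μ = frMeasure.prod frMeasure := by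
    rw [(indepFun_iff_map_prod_eq_prod_map_map hX.aemeasurable hY.aemeasurable).1 hind,
      map_eq_frMeasure μ X hX hXpos hXF, map_eq_frMeasure μ Y hY hYpos hYF]
  have hS : MeasurableSet {p : ℝ × ℝ | a * p.1 < p.2} :=
    measurableSet_lt (measurable_fst.const_mul a) measurable_snd
  have hpair : Measurable fun ω => (X ω, Y ω) := hX.prodMk hY
  have h1 : μ {ω | a * X ω < Y ω} = (frMeasure.prod frMeasure) {p : ℝ × ℝ | a * p.1 < p.2} := by
    rw [← hmap, Measure.map_apply hpair hS]; rfl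
  rw [h1, Measure.prod_apply hS]
  have h3 : ∀ u : ℝ, frMeasure (Prod.mk u ⁻¹' {p : ℝ × ℝ | a * p.1 < p.2})
      = 1 - ENNReal.ofReal (if 0 < u then Real.exp (-1/(a*u)) else 0) := by
    intro u
    have hpre : (Prod.mk u ⁻¹' {p : ℝ × ℝ | a * p.1 < p.2}) = Ioi (a*u) := rfl
    have hiff : (0 < a*u) ↔ (0 < u) := ⟨fun h => by nlinarith, fun h => mul_pos ha h⟩
    rw [hpre, ← compl_Iic, measure_compl measurableSet_Iic (measure_ne_top _ _), measure_univ,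
      frMeasure_Iic]
    simp only [hiff]
  simp_rw [h3]
  have hg : Measurable fun u : ℝ => (1:ℝ≥0∞) - ENNReal.ofReal (if 0 < u then Real.exp (-1/(a*u)) else 0) := by
    apply Measurable.const_sub
    exact ENNReal.measurable_ofReal.comp (Measurable.ite measurableSet_Ioi (by fun_prop) measurable_const)
  rw [frMeasure, lintegral_withDensity_eq_lintegral_mul _
    frDen_measurable.ennreal_ofReal hg]
  have huniv : (univ : Set ℝ) = Iic 0 ∪ Ioi 0 := by ext u; simp [le_or_gt]
  rw [← setLIntegral_univ, huniv, lintegral_union measurableSet_Ioi (Iic_disjoint_Ioi le_rfl)]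
  have h0 : (∫⁻ u in Iic (0:ℝ), ((fun u => ENNReal.ofReal (frDen u)) * fun u =>
      (1:ℝ≥0∞) - ENNReal.ofReal (if 0 < u then Real.exp (-1/(a*u)) else 0)) u) = 0 := by
    have h : _ = ∫⁻ _ in Iic (0:ℝ), (0:ℝ≥0∞) :=
      setLIntegral_congr_fun (μ := MeasureTheory.volume) (f := ((fun u => ENNReal.ofReal (frDen u)) * fun u =>
        (1:ℝ≥0∞) - ENNReal.ofReal (if 0 < u then Real.exp (-1/(a*u)) else 0))) measurableSet_Iic
        (fun u (hu : u ≤ 0) => by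
          simp [frDen, if_neg (not_lt.2 hu)])
    simpa using h
  rw [h0, zero_add]
  have hptwise : ∀ u : ℝ, 0 < u → ((fun u => ENNReal.ofReal (frDen u)) * fun u =>
      (1:ℝ≥0∞) - ENNReal.ofReal (if 0 < u then Real.exp (-1/(a*u)) else 0)) u
      = ENNReal.ofReal (Real.exp (-1/u)/u^2 - Real.exp (-c2/u)/u^2) := by
    intro u hu
    have hle : Real.exp (-1/(a*u)) ≤ 1 := by
      rw [Real.exp_le_one_iff]
      rw [neg_div]
      simp only [Left.neg_nonpos_iff]
      positivity
    have hprod : Real.exp (-1/u)/u^2 * (1 - Real.exp (-1/(a*u)))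
        = Real.exp (-1/u)/u^2 - Real.exp (-c2/u)/u^2 := by
      have hexp : Real.exp (-1/u) * Real.exp (-1/(a*u)) = Real.exp (-c2/u) := by
        rw [← Real.exp_add]
        congr 1
        rw [hc2def]
        field_simp
        ring
      rw [mul_sub, mul_one, ← hexp]
      ring
    simp only [Pi.mul_apply, frDen, if_pos hu]
    rw [← ENNReal.ofReal_one, ← ENNReal.ofReal_sub _ (Real.exp_nonneg _),
      ← ENNReal.ofReal_mul (by positivity), hprod]
  rw [setLIntegral_congr_fun measurableSet_Ioi
    (fun u (hu : 0 < u) => hptwise u hu)]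
  have hint1 := fr_integrableOn one_pos (le_refl (0:ℝ))
  have hint2 := fr_integrableOn hc2' (le_refl (0:ℝ))
  have hint12 : IntegrableOn (fun u => Real.exp (-1/u)/u^2 - Real.exp (-c2/u)/u^2) (Ioi (0:ℝ)) := hint1.sub hint2
  rw [← ofReal_integral_eq_lintegral_ofReal hint12
    (ae_restrict_of_forall_mem measurableSet_Ioi (fun u (hu : 0 < u) => by
      have hmono : Real.exp (-c2/u) ≤ Real.exp (-1/u) := by
        apply Real.exp_le_exp.2
        rw [neg_div, neg_div, neg_le_neg_iff]
        gcongr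
      simp only [Pi.zero_apply, sub_nonneg]
      exact div_le_div_of_nonneg_right hmono (by positivity) |>.trans_eq rfl))]
  rw [integral_sub hint1 hint2, fr_integral one_pos le_rfl, fr_integral hc2' le_rfl]
  simp only [frG, lt_irrefl, if_false]
  congr 1
  rw [hc2def]
  field_simp
  ring

lemma measure_pair_event {Ω : Type*} [MeasurableSpace Ω] (μ : Measure Ω) [IsProbabilityMeasure μ]
    (X Y : Ω → ℝ) (hX : Measurable X) (hY : Measurable Y) (hind : IndepFun X Y μ)
    (hXpos : ∀ᵐ ω ∂μ, 0 < X ω) (hYpos : ∀ᵐ ω ∂μ, 0 < Y ω)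
    (hXF : ∀ x : ℝ, 0 < x → μ {ω | X ω ≤ x} = ENNReal.ofReal (Real.exp (-1 / x)))
    (hYF : ∀ x : ℝ, 0 < x → μ {ω | Y ω ≤ x} = ENNReal.ofReal (Real.exp (-1 / x)))
    (a b : ℝ) (ha : 0 < a) (hb : 0 < b) (hab : 1 ≤ a * b) :
    μ {ω | Y ω / X ω ≤ a ∧ X ω / Y ω ≤ b}
      = ENNReal.ofReal (1 - 1/(a+1) - 1/(b+1)) := by
  set P : Set Ω := {ω | 0 < X ω ∧ 0 < Y ω} with hPdef
  set A : Set Ω := {ω | Y ω / X ω ≤ a ∧ X ω / Y ω ≤ b} with hAdef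
  set B : Set Ω := {ω | a * X ω < Y ω} with hBdef
  set C : Set Ω := {ω | b * Y ω < X ω} with hCdef
  have hBmeas : MeasurableSet B := measurableSet_lt (hX.const_mul a) hY
  have hCmeas : MeasurableSet C := measurableSet_lt (hY.const_mul b) hX
  have hPnull : μ Pᶜ = 0 := by
    have h := hXpos.and hYpos
    rw [ae_iff] at h
    exact h
  have hclaim1 : A ∩ P = (B ∪ C)ᶜ ∩ P := by
    ext ω
    simp only [hAdef, hBdef, hCdef, hPdef, mem_inter_iff, mem_setOf_eq, mem_compl_iff,
      mem_union, not_or, not_lt]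
    constructor
    · rintro ⟨⟨h1, h2⟩, hx, hy⟩
      exact ⟨⟨(div_le_iff₀ hx).1 h1, (div_le_iff₀ hy).1 h2⟩, hx, hy⟩
    · rintro ⟨⟨h1, h2⟩, hx, hy⟩
      exact ⟨⟨(div_le_iff₀ hx).2 h1, (div_le_iff₀ hy).2 h2⟩, hx, hy⟩
  have hclaim2 : B ∩ C ⊆ Pᶜ := by
    intro ω hω
    simp only [hBdef, hCdef, mem_inter_iff, mem_setOf_eq] at hω
    simp only [hPdef, mem_compl_iff, mem_setOf_eq, not_and_or, not_lt]
    by_contra hcon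
    push_neg at hcon
    obtain ⟨hx, hy⟩ := hcon
    nlinarith [hω.1, hω.2]
  have hμA : μ A = μ ((B ∪ C)ᶜ) := by
    rw [← measure_inter_conull hPnull, hclaim1, measure_inter_conull hPnull]
  have hBC : μ (B ∪ C) = ENNReal.ofReal (1/(a+1)) + ENNReal.ofReal (1/(b+1)) := by
    have hadd : μ (B ∪ C) + μ (B ∩ C) = μ B + μ C := measure_union_add_inter B hCmeas
    rw [measure_mono_null hclaim2 hPnull, add_zero] at hadd
    rw [hadd, measure_mul_lt μ X Y hX hY hind hXpos hYpos hXF hYF a ha,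
      measure_mul_lt μ Y X hY hX hind.symm hYpos hXpos hYF hXF b hb]
  rw [hμA, measure_compl (hBmeas.union hCmeas) (measure_ne_top _ _), measure_univ, hBC,
    ← ENNReal.ofReal_add (by positivity) (by positivity), ← ENNReal.ofReal_one,
    ← ENNReal.ofReal_sub _ (by positivity)]
  congr 1
  ring

/-- For an i.i.d. sample `(Xᵢ, Yᵢ)` from independent unit Fréchet `X` and `Y`, the maxima
`max_{i≤n} Yᵢ/Xᵢ` and `max_{i≤n} Xᵢ/Yᵢ` are asymptotically independent:
`lim_{n→∞} P(n⁻¹(max Yᵢ/Xᵢ + 1) ≤ x, n⁻¹(max Xᵢ/Yᵢ + 1) ≤ y) = exp(-1/x - 1/y)`. -/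
theorem frechet_max_quotients_asymp_indep {Ω : Type*} [MeasurableSpace Ω] (μ : Measure Ω)
    [IsProbabilityMeasure μ] (X Y : ℕ → Ω → ℝ)
    (hX : ∀ i, Measurable (X i)) (hY : ∀ i, Measurable (Y i))
    (hiid : iIndepFun (fun i ω => (X i ω, Y i ω)) μ)
    (hident : ∀ i, Measure.map (fun ω => (X i ω, Y i ω)) μ
      = Measure.map (fun ω => (X 0 ω, Y 0 ω)) μ)
    (hindep : ∀ i, IndepFun (X i) (Y i) μ)
    (hXpos : ∀ i, ∀ᵐ ω ∂μ, 0 < X i ω) (hYpos : ∀ i, ∀ᵐ ω ∂μ, 0 < Y i ω)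
    (hXF : ∀ i, ∀ x : ℝ, 0 < x → μ {ω | X i ω ≤ x} = ENNReal.ofReal (exp (-1 / x)))
    (hYF : ∀ i, ∀ x : ℝ, 0 < x → μ {ω | Y i ω ≤ x} = ENNReal.ofReal (exp (-1 / x))) :
    ∀ x y : ℝ, 0 < x → 0 < y →
      Tendsto (fun n : ℕ =>
          (μ {ω | (n : ℝ)⁻¹ * ((⨆ i : Fin n, Y i ω / X i ω) + 1) ≤ x ∧
                  (n : ℝ)⁻¹ * ((⨆ i : Fin n, X i ω / Y i ω) + 1) ≤ y}).toReal)
        atTop (nhds (exp (-1 / x - 1 / y))) := by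
  intro x y hx hy
  set t : ℝ := -1 / x - 1 / y with htdef
  apply (Real.tendsto_one_add_div_pow_exp t).congr'
  have he1 : ∀ᶠ n : ℕ in atTop, (1:ℝ) < (n:ℝ) * x :=
    (tendsto_natCast_atTop_atTop.atTop_mul_const hx).eventually_gt_atTop 1
  have he2 : ∀ᶠ n : ℕ in atTop, (1:ℝ) < (n:ℝ) * y :=
    (tendsto_natCast_atTop_atTop.atTop_mul_const hy).eventually_gt_atTop 1
  have he3 : ∀ᶠ n : ℕ in atTop, (1:ℝ) ≤ ((n:ℝ) * x - 1) * ((n:ℝ) * y - 1) := by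
    apply Tendsto.eventually_ge_atTop
    apply Tendsto.atTop_mul_atTop₀
    · exact tendsto_atTop_add_const_right _ _ (tendsto_natCast_atTop_atTop.atTop_mul_const hx)
    · exact tendsto_atTop_add_const_right _ _ (tendsto_natCast_atTop_atTop.atTop_mul_const hy)
  filter_upwards [he1, he2, he3, eventually_gt_atTop 0] with n hn1 hn2 hn3 hnpos
  have hnR : (0:ℝ) < n := Nat.cast_pos.2 hnpos
  set a : ℝ := (n:ℝ) * x - 1 with hadef
  set b : ℝ := (n:ℝ) * y - 1 with hbdef
  have ha : 0 < a := by simp only [hadef]; linarith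
  have hb : 0 < b := by simp only [hbdef]; linarith
  have hab : 1 ≤ a * b := hn3
  set S : Set (ℝ × ℝ) := {p : ℝ × ℝ | p.2 / p.1 ≤ a ∧ p.1 / p.2 ≤ b} with hSdef
  have hS : MeasurableSet S := by
    apply MeasurableSet.inter
    · exact measurableSet_le (measurable_snd.div measurable_fst) measurable_const
    · exact measurableSet_le (measurable_fst.div measurable_snd) measurable_const
  haveI : Nonempty (Fin n) := Fin.pos_iff_nonempty.1 hnpos
  have hevent : {ω | (n : ℝ)⁻¹ * ((⨆ i : Fin n, Y i ω / X i ω) + 1) ≤ x ∧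
      (n : ℝ)⁻¹ * ((⨆ i : Fin n, X i ω / Y i ω) + 1) ≤ y}
      = ⋂ i ∈ Finset.range n, (fun ω => (X i ω, Y i ω)) ⁻¹' S := by
    ext ω
    simp only [mem_setOf_eq, Set.mem_iInter, mem_preimage, hSdef, Finset.mem_range]
    constructor
    · rintro ⟨h1, h2⟩ i hi
      rw [inv_mul_le_iff₀ hnR] at h1 h2
      have h1' : (⨆ j : Fin n, Y j ω / X j ω) ≤ a := by simp only [hadef]; linarith
      have h2' : (⨆ j : Fin n, X j ω / Y j ω) ≤ b := by simp only [hbdef]; linarith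
      rw [ciSup_le_iff (Finite.bddAbove_range _)] at h1' h2'
      exact ⟨h1' ⟨i, hi⟩, h2' ⟨i, hi⟩⟩
    · intro h
      have h1' : (⨆ j : Fin n, Y j ω / X j ω) ≤ a :=
        ciSup_le (fun j => (h j.1 j.2).1)
      have h2' : (⨆ j : Fin n, X j ω / Y j ω) ≤ b :=
        ciSup_le (fun j => (h j.1 j.2).2)
      constructor <;> rw [inv_mul_le_iff₀ hnR]
      · simp only [hadef] at h1'; linarith
      · simp only [hbdef] at h2'; linarith
  have hprod := hiid.measure_inter_preimage_eq_mul (Finset.range n)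
    (sets := fun _ => S) (fun i _ => hS)
  have hfac : ∀ i : ℕ, μ ((fun ω => (X i ω, Y i ω)) ⁻¹' S)
      = ENNReal.ofReal (1 - 1/(a+1) - 1/(b+1)) := by
    intro i
    rw [← Measure.map_apply ((hX i).prodMk (hY i)) hS, hident i,
      Measure.map_apply ((hX 0).prodMk (hY 0)) hS]
    exact measure_pair_event μ (X 0) (Y 0) (hX 0) (hY 0) (hindep 0) (hXpos 0) (hYpos 0)
      (hXF 0) (hYF 0) a b ha hb hab
  have hp0 : 0 ≤ 1 - 1/(a+1) - 1/(b+1) := by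
    have hkey : 1 - 1/(a+1) - 1/(b+1) = (a*b - 1)/((a+1)*(b+1)) := by
      field_simp
      ring
    rw [hkey]
    apply div_nonneg (by linarith) (by positivity)
  rw [hevent, hprod]
  simp only [hfac, Finset.prod_const, Finset.card_range]
  rw [← ENNReal.ofReal_pow hp0, ENNReal.toReal_ofReal (by positivity)]
  congr 1
  simp only [hadef, hbdef, htdef]
  have hxne : x ≠ 0 := hx.ne'
  have hyne : y ≠ 0 := hy.ne'
  have h1 : (n:ℝ) * x - 1 + 1 = (n:ℝ) * x := by ring
  have h2 : (n:ℝ) * y - 1 + 1 = (n:ℝ) * y := by ring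
  rw [h1, h2]
  field_simp
  ring
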